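/- Let G be a finite simple graph without isolated vertices, and let D be a minimum dominating set in G. Then there is a set T ⊆ V(G) ∖ D such that T is a dominating set in G and |T| ≤ α(G) + ⌊(γ(G) − 1)/2⌋. -/

import Mathlib

/-- `D` is a dominating set of `G`: every vertex lies in `D` or has a neighbor in `D`. -/
def IsDomSet {V : Type*} (G : SimpleGraph V) (D : Set V) : Prop :=
  ∀ v : V, v ∈ D ∨ ∃ u ∈ D, G.Adj u v

/-- `S` is an independent set of `G`. -/
def IsIndep {V : Type*} (G : SimpleGraph V) (S : Set V) : Prop :=
  S.Pairwise fun u v => ¬ G.Adj u v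

/-- The domination number of `G`: the minimum size of a dominating set. -/
noncomputable def gamma {V : Type*} (G : SimpleGraph V) : ℕ :=
  sInf {n | ∃ D : Set V, IsDomSet G D ∧ D.ncard = n}

/-- The independence number of `G`: the maximum size of an independent set. -/
noncomputable def alpha {V : Type*} (G : SimpleGraph V) : ℕ :=
  sSup {n | ∃ S : Set V, IsIndep G S ∧ S.ncard = n}

/-- The inverse domination number of `G`: the minimum size of a dominating set
disjoint from some minimum dominating set. -/
noncomputable def invGamma {V : Type*} (G : SimpleGraph V) : ℕ :=
  sInf {n | ∃ D T : Set V, IsDomSet G D ∧ D.ncard = gamma G ∧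
    IsDomSet G T ∧ D ∩ T = ∅ ∧ T.ncard = n}

/-- The independence number of the subgraph of `G` induced by `D`. -/
noncomputable def alphaOn {V : Type*} (G : SimpleGraph V) (D : Set V) : ℕ :=
  sSup {n | ∃ S : Set V, S ⊆ D ∧ IsIndep G S ∧ S.ncard = n}

/-- The number of edges of the subgraph of `G` induced by `D`. -/
noncomputable def edgeCountOn {V : Type*} (G : SimpleGraph V) (D : Set V) : ℕ :=
  {e ∈ G.edgeSet | ∀ v ∈ e, v ∈ D}.ncard

/-- `D` is an optimal dominating set: of minimum size; among those, `G[D]` has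
maximum independence number; and subject to that, `G[D]` has fewest edges. -/
def IsOptimalDomSet {V : Type*} (G : SimpleGraph V) (D : Set V) : Prop :=
  IsDomSet G D ∧ D.ncard = gamma G ∧
  (∀ D' : Set V, IsDomSet G D' → D'.ncard = gamma G → alphaOn G D' ≤ alphaOn G D) ∧
  (∀ D' : Set V, IsDomSet G D' → D'.ncard = gamma G →
    alphaOn G D' = alphaOn G D → edgeCountOn G D ≤ edgeCountOn G D')

/-- `w` is a private neighbor of `v` with respect to `D`: `w ∉ D` and `N(w) ∩ D = {v}`. -/
def IsPrivateNbr {V : Type*} (G : SimpleGraph V) (D : Set V) (v w : V) : Prop :=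
  w ∉ D ∧ G.Adj v w ∧ ∀ u ∈ D, G.Adj u w → u = v

/-- `R` is a partial independent set of representatives (partial ISR) for the family `P`:
an independent set consisting of distinct representatives of some subfamily of `P`. -/
def IsPartialISR {V : Type*} (G : SimpleGraph V) {n : ℕ} (P : Fin n → Set V)
    (R : Set V) : Prop :=
  IsIndep G R ∧ ∃ (J : Set (Fin n)) (x : Fin n → V),
    Set.InjOn x J ∧ (∀ j ∈ J, x j ∈ P j) ∧ R = x '' J

/-- `b(G)`: the largest number of vertices of an induced bipartite subgraph of `G`. -/
noncomputable def bipNum {V : Type*} (G : SimpleGraph V) : ℕ :=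
  sSup {n | ∃ B A : Set V, A ⊆ B ∧ IsIndep G A ∧ IsIndep G (B \ A) ∧ B.ncard = n}

section Auxiliary

variable {V : Type*} [Fintype V] (G : SimpleGraph V)

/-- The (open) neighborhood of a set of vertices. -/
private def nbhd (R : Set V) : Set V := {v | ∃ r ∈ R, G.Adj r v}

private lemma mem_nbhd {R : Set V} {v : V} : v ∈ nbhd G R ↔ ∃ r ∈ R, G.Adj r v := Iff.rfl

private lemma nbhd_mono {R R' : Set V} (h : R ⊆ R') : nbhd G R ⊆ nbhd G R' := by
  rintro v ⟨r, hr, hadj⟩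
  exact ⟨r, h hr, hadj⟩

private lemma ncard_le_card_univ (s : Set V) : s.ncard ≤ Fintype.card V := by
  classical
  calc s.ncard ≤ (Set.univ : Set V).ncard :=
        Set.ncard_le_ncard (Set.subset_univ s) (Set.toFinite _)
    _ = Fintype.card V := by rw [Set.ncard_univ, Nat.card_eq_fintype_card]

private lemma alpha_ge (W : Set V) (hW : IsIndep G W) : W.ncard ≤ alpha G := by
  apply le_csSup
  · exact ⟨Fintype.card V, by rintro n ⟨S, _, rfl⟩; exact ncard_le_card_univ S⟩
  · exact ⟨W, hW, rfl⟩

private lemma gamma_le' {V' : Type*} (G' : SimpleGraph V') (E : Set V') (hE : IsDomSet G' E) :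
    gamma G' ≤ E.ncard := Nat.sInf_le ⟨E, hE, rfl⟩

/-- In a finite graph, every set `Z` contains a "maximal independent subset": an independent
set `S ⊆ Z` such that every vertex of `Z` outside `S` has a neighbor in `S`. -/
private lemma exists_maximal_indep (Z : Set V) :
    ∃ S : Set V, S ⊆ Z ∧ IsIndep G S ∧ ∀ y ∈ Z, y ∉ S → ∃ s ∈ S, G.Adj s y := by
  classical
  set M : Set ℕ := {n | ∃ S : Set V, (S ⊆ Z ∧ IsIndep G S) ∧ S.ncard = n} with hM
  have hne : M.Nonempty := ⟨0, ∅, ⟨Set.empty_subset _, Set.pairwise_empty _⟩, by simp⟩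
  have hbdd : BddAbove M := ⟨Fintype.card V, by rintro n ⟨S, _, rfl⟩; exact ncard_le_card_univ S⟩
  obtain ⟨S, ⟨hSZ, hSind⟩, hScard⟩ := Nat.sSup_mem hne hbdd
  refine ⟨S, hSZ, hSind, ?_⟩
  intro y hyZ hyS
  by_contra hcon
  push_neg at hcon
  have hins : IsIndep G (insert y S) := by
    intro a ha b hb hab
    rcases Set.mem_insert_iff.mp ha with ha' | ha'
    · rcases Set.mem_insert_iff.mp hb with hb' | hb'
      · exact absurd (ha'.trans hb'.symm) hab
      · intro h
        rw [ha'] at h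
        exact hcon b hb' h.symm
    · rcases Set.mem_insert_iff.mp hb with hb' | hb'
      · intro h
        rw [hb'] at h
        exact hcon a ha' h
      · exact hSind ha' hb' hab
  have hmem : (insert y S).ncard ∈ M :=
    ⟨insert y S, ⟨Set.insert_subset hyZ hSZ, hins⟩, rfl⟩
  have hle : (insert y S).ncard ≤ sSup M := le_csSup hbdd hmem
  rw [Set.ncard_insert_of_notMem hyS (Set.toFinite S), hScard] at hle
  omega

end Auxiliary

theorem inverse_dom_le_alpha_add_half_gamma {V : Type*} [Fintype V] (G : SimpleGraph V)
    (hiso : ∀ v : V, ∃ u, G.Adj v u)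
    (D : Set V) (hDdom : IsDomSet G D) (hDmin : D.ncard = gamma G) :
    ∃ T : Set V, T ⊆ Set.univ \ D ∧ IsDomSet G T ∧
      T.ncard ≤ alpha G + (gamma G - 1) / 2 := by
  classical
  rcases isEmpty_or_nonempty V with hV | hV
  · exact ⟨∅, by simp, fun v => (hV.false v).elim, by simp⟩
  have hDfin : D.Finite := Set.toFinite D
  -- D is nonempty, so gamma ≥ 1
  have hDne : D.Nonempty := by
    obtain ⟨v⟩ := hV
    rcases hDdom v with hv | ⟨u, hu, _⟩
    exacts [⟨v, hv⟩, ⟨u, hu⟩]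
  have hγpos : 1 ≤ gamma G := by
    have h0 : 0 < D.ncard := (Set.ncard_pos hDfin).mpr hDne
    omega
  -- every vertex of D has a neighbor outside D (uses minimality of D)
  have hext : ∀ v ∈ D, ∃ u, u ∉ D ∧ G.Adj v u := by
    intro v hv
    by_contra hcon
    push_neg at hcon
    have hsub : IsDomSet G (D \ {v}) := by
      intro w
      by_cases hwv : w = v
      · subst hwv
        obtain ⟨u, hadj⟩ := hiso w
        have huD : u ∈ D := by
          by_contra huD
          exact hcon u huD hadj
        have hne : u ≠ w := hadj.ne'
        exact Or.inr ⟨u, ⟨huD, by simp [hne]⟩, hadj.symm⟩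
      · rcases hDdom w with hw | ⟨u, huD, hadj⟩
        · exact Or.inl ⟨hw, by simp [hwv]⟩
        · by_cases huv : u = v
          · subst huv
            have hwD : w ∈ D := by
              by_contra hwD
              exact hcon w hwD hadj
            exact Or.inl ⟨hwD, by simp [hwv]⟩
          · exact Or.inr ⟨u, ⟨huD, by simp [huv]⟩, hadj⟩
    have hlt : (D \ {v}).ncard < D.ncard := by
      have h1 : (D \ {v}).ncard = D.ncard - 1 :=
        Set.ncard_diff_singleton_of_mem hv
      have h0 : 0 < D.ncard := (Set.ncard_pos hDfin).mpr hDne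
      omega
    have hge := gamma_le' G _ hsub
    omega
  -- K : maximal independent subset of D
  obtain ⟨K, hKD, hKind, hKmax⟩ := exists_maximal_indep G D
  have hKne : K.Nonempty := by
    obtain ⟨d, hd⟩ := hDne
    by_cases hdK : d ∈ K
    · exact ⟨d, hdK⟩
    · obtain ⟨k, hk, _⟩ := hKmax d hd hdK
      exact ⟨k, hk⟩
  set C : Set V := D \ K with hC
  -- the "orphan process": among independent external sets R whose D-neighbors all lie in C
  -- and satisfying the invariant |R| + |C \ N(R)| ≤ |C|, minimize |C \ N(R)|.
  set Pr : Set V → Prop := fun R =>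
    (∀ r ∈ R, r ∉ D) ∧ IsIndep G R ∧ (∀ r ∈ R, ∀ u ∈ D, G.Adj r u → u ∈ C) ∧
      R.ncard + (C \ nbhd G R).ncard ≤ C.ncard with hPrdef
  have hPr0 : Pr ∅ := by
    refine ⟨by simp, Set.pairwise_empty _, by simp, ?_⟩
    have hnb : nbhd G (∅ : Set V) = ∅ := by
      ext v
      simp [mem_nbhd]
    simp [hnb]
  set M2 : Set ℕ := {n | ∃ R : Set V, Pr R ∧ (C \ nbhd G R).ncard = n} with hM2
  have hM2ne : M2.Nonempty := ⟨_, ∅, hPr0, rfl⟩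
  set μ := sInf M2 with hμdef
  obtain ⟨R, hPR, hRμ⟩ : ∃ R : Set V, Pr R ∧ (C \ nbhd G R).ncard = μ := Nat.sInf_mem hM2ne
  have hRD : ∀ r ∈ R, r ∉ D := hPR.1
  have hRind : IsIndep G R := hPR.2.1
  have hRowners : ∀ r ∈ R, ∀ u ∈ D, G.Adj r u → u ∈ C := hPR.2.2.1
  have hRinv : R.ncard + μ ≤ C.ncard := by
    have := hPR.2.2.2
    omega
  -- Key claim: μ ≤ |R|
  have hμR : μ ≤ R.ncard := by
    by_contra hlt
    push_neg at hlt
    set U : Set V := C \ nbhd G R with hU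
    have hUD : U ⊆ D := fun x hx => hx.1.1
    have hUcard : U.ncard = μ := hRμ
    have hUleD : U.ncard ≤ D.ncard := Set.ncard_le_ncard hUD hDfin
    -- the candidate smaller dominating set (D \ U) ∪ R is not dominating
    have hDnotdom : ¬ IsDomSet G ((D \ U) ∪ R) := by
      intro hdom
      have hle := gamma_le' G _ hdom
      have h1 : ((D \ U) ∪ R).ncard ≤ (D \ U).ncard + R.ncard := Set.ncard_union_le _ _
      have h2 : (D \ U).ncard = D.ncard - U.ncard := Set.ncard_diff hUD (Set.toFinite _)
      omega
    unfold IsDomSet at hDnotdom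
    push_neg at hDnotdom
    obtain ⟨x, hxD', hxnadj⟩ := hDnotdom
    -- the undominated vertex x is external
    have hxD : x ∉ D := by
      intro hxDmem
      have hxU : x ∈ U := by
        by_contra hxU
        exact hxD' (Set.mem_union_left _ ⟨hxDmem, hxU⟩)
      obtain ⟨k, hkK, hkadj⟩ := hKmax x hxDmem hxU.1.2
      have hkD' : k ∈ (D \ U) ∪ R :=
        Set.mem_union_left _ ⟨hKD hkK, fun hkU => hkU.1.2 hkK⟩
      exact hxnadj k hkD' hkadj
    -- all D-neighbors of x lie in U
    have howner : ∀ u ∈ D, G.Adj u x → u ∈ U := by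
      intro u huD hadj
      by_contra huU
      exact hxnadj u (Set.mem_union_left _ ⟨huD, huU⟩) hadj
    obtain ⟨u₀, hu₀D, hu₀adj⟩ : ∃ u ∈ D, G.Adj u x := by
      rcases hDdom x with h | h
      · exact absurd h hxD
      · exact h
    have hu₀U : u₀ ∈ U := howner u₀ hu₀D hu₀adj
    have hxR : x ∉ R := fun h => hxD' (Set.mem_union_right _ h)
    have hxNB : x ∉ nbhd G R := by
      rintro ⟨r, hrR, hradj⟩
      exact hxnadj r (Set.mem_union_right _ hrR) hradj
    -- add x to R
    set R' : Set V := insert x R with hR'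
    have hsub2 : C \ nbhd G R' ⊆ U \ {u₀} := by
      intro z hz
      have hzNB : z ∉ nbhd G R := fun h => hz.2 (nbhd_mono G (Set.subset_insert x R) h)
      refine ⟨⟨hz.1, hzNB⟩, ?_⟩
      intro hzu
      rw [Set.mem_singleton_iff] at hzu
      subst hzu
      exact hz.2 ⟨x, Set.mem_insert x R, hu₀adj.symm⟩
    have hcard1 : (C \ nbhd G R').ncard ≤ (U \ {u₀}).ncard :=
      Set.ncard_le_ncard hsub2 (Set.toFinite _)
    have hcard2 : (U \ {u₀}).ncard = U.ncard - 1 :=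
      Set.ncard_diff_singleton_of_mem hu₀U
    have hcard3 : R'.ncard = R.ncard + 1 :=
      Set.ncard_insert_of_notMem hxR (Set.toFinite _)
    have hPR' : Pr R' := by
      refine ⟨?_, ?_, ?_, ?_⟩
      · intro r hr
        rcases Set.mem_insert_iff.mp hr with hr' | hr'
        · rw [hr']; exact hxD
        · exact hRD r hr'
      · intro a ha b hb hab
        rcases Set.mem_insert_iff.mp ha with ha' | ha'
        · rcases Set.mem_insert_iff.mp hb with hb' | hb'
          · exact absurd (ha'.trans hb'.symm) hab
          · intro h
            rw [ha'] at h
            exact hxNB ⟨b, hb', h.symm⟩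
        · rcases Set.mem_insert_iff.mp hb with hb' | hb'
          · intro h
            rw [hb'] at h
            exact hxNB ⟨a, ha', h⟩
          · exact hRind ha' hb' hab
      · intro r hr u huD hadj
        rcases Set.mem_insert_iff.mp hr with hr' | hr'
        · rw [hr'] at hadj
          exact (howner u huD hadj.symm).1
        · exact hRowners r hr' u huD hadj
      · omega
    have hmem : (C \ nbhd G R').ncard ∈ M2 := ⟨R', hPR', rfl⟩
    have hge := Nat.sInf_le hmem
    omega
  have h2μ : 2 * μ ≤ C.ncard := by omega
  -- S : maximal independent subset of the externals not meeting N[R]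
  set Z : Set V := {y | y ∉ D ∧ y ∉ R ∧ y ∉ nbhd G R} with hZ
  obtain ⟨S, hSZ, hSind, hSmax⟩ := exists_maximal_indep G Z
  set NS : Set V := nbhd G S with hNS
  set Dunc : Set V := D \ (nbhd G R ∪ NS) with hDuncdef
  -- choose an external neighbor for each vertex of D
  have hext' : ∀ v : V, ∃ u, v ∈ D → (u ∉ D ∧ G.Adj v u) := by
    intro v
    by_cases hv : v ∈ D
    · obtain ⟨u, hu⟩ := hext v hv
      exact ⟨u, fun _ => hu⟩
    · exact ⟨v, fun h => absurd h hv⟩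
  choose f hf using hext'
  set T : Set V := R ∪ S ∪ (f '' Dunc) with hT
  have hRT : ∀ r ∈ R, r ∈ T := fun r h =>
    Set.mem_union_left _ (Set.mem_union_left _ h)
  have hST : ∀ s ∈ S, s ∈ T := fun s h =>
    Set.mem_union_left _ (Set.mem_union_right _ h)
  have hfT : ∀ v ∈ Dunc, f v ∈ T := fun v h =>
    Set.mem_union_right _ ⟨v, h, rfl⟩
  -- T avoids D
  have hTsub : T ⊆ Set.univ \ D := by
    intro t ht
    refine ⟨trivial, ?_⟩
    rcases ht with h | h
    · rcases h with h' | h'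
      · exact hRD t h'
      · exact (hSZ h').1
    · obtain ⟨v, hv, rfl⟩ := h
      exact (hf v hv.1).1
  -- T dominates
  have hTdom : IsDomSet G T := by
    intro v
    by_cases hvD : v ∈ D
    · by_cases h1 : v ∈ nbhd G R
      · obtain ⟨r, hrR, hr⟩ := h1
        exact Or.inr ⟨r, hRT r hrR, hr⟩
      · by_cases h2 : v ∈ NS
        · obtain ⟨s, hsS, hs⟩ := h2
          exact Or.inr ⟨s, hST s hsS, hs⟩
        · have hvunc : v ∈ Dunc := by
            refine ⟨hvD, ?_⟩
            intro h
            rcases h with h' | h'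
            exacts [h1 h', h2 h']
          have hfv := hf v hvD
          exact Or.inr ⟨f v, hfT v hvunc, hfv.2.symm⟩
    · by_cases hvR : v ∈ R
      · exact Or.inl (hRT v hvR)
      · by_cases hvNB : v ∈ nbhd G R
        · obtain ⟨r, hrR, hr⟩ := hvNB
          exact Or.inr ⟨r, hRT r hrR, hr⟩
        · have hvZ : v ∈ Z := ⟨hvD, hvR, hvNB⟩
          by_cases hvS : v ∈ S
          · exact Or.inl (hST v hvS)
          · obtain ⟨s, hsS, hs⟩ := hSmax v hvZ hvS
            exact Or.inr ⟨s, hST s hsS, hs⟩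
  -- the independent witness W = R ∪ S ∪ (K \ NS)
  set W : Set V := R ∪ S ∪ (K \ NS) with hW
  have hRS : ∀ r ∈ R, ∀ s ∈ S, ¬ G.Adj r s := by
    intro r hr s hs hadj
    exact (hSZ hs).2.2 ⟨r, hr, hadj⟩
  have hRK : ∀ r ∈ R, ∀ k ∈ K, ¬ G.Adj r k := by
    intro r hr k hk hadj
    exact (hRowners r hr k (hKD hk) hadj).2 hk
  have hSK : ∀ s ∈ S, ∀ k ∈ K \ NS, ¬ G.Adj s k := by
    intro s hs k hk hadj
    exact hk.2 ⟨s, hs, hadj⟩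
  have hWind : IsIndep G W := by
    intro a ha b hb hab
    rcases ha with ha' | haK
    · rcases ha' with haR | haS
      · rcases hb with hb' | hbK
        · rcases hb' with hbR | hbS
          · exact hRind haR hbR hab
          · exact hRS a haR b hbS
        · exact hRK a haR b hbK.1
      · rcases hb with hb' | hbK
        · rcases hb' with hbR | hbS
          · exact fun h => hRS b hbR a haS h.symm
          · exact hSind haS hbS hab
        · exact hSK a haS b hbK
    · rcases hb with hb' | hbK
      · rcases hb' with hbR | hbS
        · exact fun h => hRK b hbR a haK.1 h.symm
        · exact fun h => hSK b hbS a haK h.symm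
      · exact hKind haK.1 hbK.1 hab
  -- cardinality of the witness
  have hdisj1 : Disjoint R S := by
    rw [Set.disjoint_left]
    intro r hrR hrS
    exact (hSZ hrS).2.1 hrR
  have hdisj2 : Disjoint (R ∪ S) (K \ NS) := by
    rw [Set.disjoint_left]
    intro a ha haK
    have haD : a ∈ D := hKD haK.1
    rcases ha with h | h
    · exact hRD a h haD
    · exact (hSZ h).1 haD
  have hWcard : W.ncard = R.ncard + S.ncard + (K \ NS).ncard := by
    rw [hW, Set.ncard_union_eq hdisj2 (Set.toFinite _) (Set.toFinite _),
      Set.ncard_union_eq hdisj1 (Set.toFinite _) (Set.toFinite _)]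
  have hWα : R.ncard + S.ncard + (K \ NS).ncard ≤ alpha G := by
    rw [← hWcard]
    exact alpha_ge G W hWind
  -- cardinality of T
  have hTcard : T.ncard ≤ R.ncard + S.ncard + Dunc.ncard := by
    have h1 : T.ncard ≤ (R ∪ S).ncard + (f '' Dunc).ncard := Set.ncard_union_le _ _
    have h2 : (R ∪ S).ncard ≤ R.ncard + S.ncard := Set.ncard_union_le _ _
    have h3 : (f '' Dunc).ncard ≤ Dunc.ncard := Set.ncard_image_le (Set.toFinite _)
    omega
  have hDuncsub : Dunc ⊆ (K \ NS) ∪ (C \ nbhd G R) := by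
    intro v hv
    have hvD := hv.1
    have hvNB : v ∉ nbhd G R := fun h => hv.2 (Set.mem_union_left _ h)
    have hvNS : v ∉ NS := fun h => hv.2 (Set.mem_union_right _ h)
    by_cases hvK : v ∈ K
    · exact Set.mem_union_left _ ⟨hvK, hvNS⟩
    · exact Set.mem_union_right _ ⟨⟨hvD, hvK⟩, hvNB⟩
  have hDunccard : Dunc.ncard ≤ (K \ NS).ncard + μ := by
    have h1 : Dunc.ncard ≤ ((K \ NS) ∪ (C \ nbhd G R)).ncard :=
      Set.ncard_le_ncard hDuncsub (Set.toFinite _)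
    have h2 : ((K \ NS) ∪ (C \ nbhd G R)).ncard ≤ (K \ NS).ncard + (C \ nbhd G R).ncard :=
      Set.ncard_union_le _ _
    omega
  -- μ ≤ (γ - 1)/2
  have hKpos : 1 ≤ K.ncard := by
    have : 0 < K.ncard := (Set.ncard_pos (Set.toFinite _)).mpr hKne
    omega
  have hCcard : C.ncard = D.ncard - K.ncard := Set.ncard_diff hKD (Set.toFinite _)
  have hKleD : K.ncard ≤ D.ncard := Set.ncard_le_ncard hKD hDfin
  have hμle : μ ≤ (gamma G - 1) / 2 := by
    rw [Nat.le_div_iff_mul_le (by norm_num : 0 < 2)]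
    omega
  exact ⟨T, hTsub, hTdom, by omega⟩
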